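/- Let I be a countable set, let m ≥ 2, and let σ be a fixed-point-free permutation of {1,…,m}. Let J_1, …, J_m ⊆ I and let M : I × I → ℂ satisfy Σ_{(i,j) ∈ J_p × J_{σ(p)}} |M(i,j)|² < ∞ for every p = 1, …, m. Then the family ((i_1,…,i_m) ↦ ∏_{p=1}^m M(i_p, i_{σ(p)})), indexed by the m-tuples (i_1,…,i_m) ∈ J_1 × ⋯ × J_m, is absolutely summable. -/

import Mathlib

open MeasureTheory ENNReal NNReal

lemma aux_tsum_cs {α : Type*} (f g : α → ℝ≥0∞) :
    ∑' x, f x * g x ≤ (∑' x, f x ^ 2) ^ (1/2 : ℝ) * (∑' x, g x ^ 2) ^ (1/2 : ℝ) := by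
  letI : MeasurableSpace α := ⊤
  have hm : ∀ h : α → ℝ≥0∞, Measurable h := fun h s _ => trivial
  have hpq : Real.HolderConjugate 2 2 := Real.HolderConjugate.two_two
  have h := ENNReal.lintegral_mul_le_Lp_mul_Lq (Measure.count : Measure α) hpq
      (hm f).aemeasurable (hm g).aemeasurable
  rw [lintegral_count' (hm _), lintegral_count' (hm _), lintegral_count' (hm _)] at h
  have h2 : ∀ x : ℝ≥0∞, x ^ (2:ℝ) = x ^ 2 := fun x => by
    rw [← ENNReal.rpow_natCast x 2]; norm_num
  simp only [Pi.mul_apply, h2] at h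
  exact h

lemma aux_tsum_cs_ne_top {α : Type*} (f g : α → ℝ≥0∞)
    (hf : (∑' x, f x ^ 2) ≠ ∞) (hg : (∑' x, g x ^ 2) ≠ ∞) :
    (∑' x, f x * g x) ≠ ∞ :=
  ne_top_of_le_ne_top (ENNReal.mul_ne_top (ENNReal.rpow_ne_top_of_nonneg (by norm_num) hf)
    (ENNReal.rpow_ne_top_of_nonneg (by norm_num) hg)) (aux_tsum_cs f g)

lemma aux_sqrt_sq (A : ℝ≥0∞) : (A ^ (1/2 : ℝ)) ^ 2 = A := by
  rw [← ENNReal.rpow_natCast (A ^ (1/2:ℝ)) 2, ← ENNReal.rpow_mul]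
  norm_num

lemma aux_key {I : Type*} :
    ∀ (n : ℕ) (P : Type) [Fintype P] [DecidableEq P], Fintype.card P = n →
      ∀ (σ : Equiv.Perm P) (J : P → Set I) (a : P → I → I → ℝ≥0∞),
      (∀ p, σ p ≠ p → (∑' xy : J p × J (σ p), a p xy.1 xy.2 ^ 2) ≠ ∞) →
      (∀ p, σ p = p → (∑' x : J p, a p x x) ≠ ∞) →
      (∑' i : (p : P) → J p, ∏ p, a p (i p : I) (i (σ p) : I)) ≠ ∞ := by
  intro n
  induction n with
  | zero =>
    intro P _ _ hcard σ J a h1 h2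
    haveI : IsEmpty P := Fintype.card_eq_zero_iff.mp hcard
    have hone : ∀ i : (p : P) → J p, (∏ p, a p (i p : I) (i (σ p) : I)) = 1 := fun i => by
      simp [Finset.univ_eq_empty]
    rw [tsum_congr hone, tsum_eq_single (default)
      (fun b hb => absurd (Subsingleton.elim b default) hb)]
    exact one_ne_top
  | succ n IH =>
    intro P _ _ hcard σ J a h1 h2
    haveI : Nonempty P := Fintype.card_pos_iff.mp (by omega)
    obtain ⟨q⟩ := ‹Nonempty P›
    have hcard' : Fintype.card {p : P // p ≠ q} = n := by
      simp only [Ne, Fintype.card_subtype_compl, Fintype.card_subtype_eq]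
      omega
    set E := Equiv.piSplitAt q (fun p : P => (J p : Type _)) with hE
    by_cases hq : σ q = q
    · -- q is a fixed point: factor it out
      have hiff : ∀ p : P, p ≠ q ↔ σ p ≠ q :=
        fun p => not_iff_not.mpr ⟨fun h => h ▸ hq, fun h => σ.injective (h.trans hq.symm)⟩
      set σ' : Equiv.Perm {p : P // p ≠ q} := σ.subtypePerm (fun p => (hiff p).symm) with hσ'
      set G : ↥(J q) × ((p : {p : P // p ≠ q}) → ↥(J p.1)) → ℝ≥0∞ :=
        fun y => a q y.1 y.1 * ∏ p : {p : P // p ≠ q}, a p.1 (y.2 p : I) (y.2 (σ' p) : I)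
        with hG
      have hFG : ∀ i : (p : P) → J p,
          (∏ p, a p (i p : I) (i (σ p) : I)) = G (E i) := by
        intro i
        rw [hG, Fintype.prod_eq_mul_prod_compl q, Finset.prod_subtype (p := fun p => p ≠ q)
          ({q}ᶜ : Finset P) (fun p => by simp) (fun p => a p (i p : I) (i (σ p) : I))]
        have : (i (σ q) : I) = (i q : I) := by rw [hq]
        rw [this]
        rfl
      rw [tsum_congr hFG, E.tsum_eq G, ENNReal.tsum_prod']
      have hsplit : ∀ x : ↥(J q),
          (∑' i' : (p : {p : P // p ≠ q}) → ↥(J p.1), G (x, i'))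
            = a q x x * ∑' i' : (p : {p : P // p ≠ q}) → ↥(J p.1),
                ∏ p : {p : P // p ≠ q}, a p.1 (i' p : I) (i' (σ' p) : I) := fun x => by
        have hb : ∀ i' : (p : {p : P // p ≠ q}) → ↥(J p.1), G (x, i')
            = a q (x : I) (x : I) * ∏ p : {p : P // p ≠ q}, a p.1 (i' p : I) (i' (σ' p) : I) :=
          fun i' => rfl
        rw [tsum_congr hb]; exact ENNReal.tsum_mul_left
      rw [tsum_congr hsplit, ENNReal.tsum_mul_right]
      refine ENNReal.mul_ne_top (h2 q hq) ?_
      exact IH _ hcard' σ' (fun p => J p.1) (fun p => a p.1)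
        (fun p hp => h1 p.1 (fun hh => hp (Subtype.ext hh)))
        (fun p hp => h2 p.1 (congrArg Subtype.val hp))
    · -- q is not fixed: splice it out with Cauchy–Schwarz
      set s := σ q with hs_def
      have hs : s ≠ q := fun h => hq h
      set r := σ.symm q with hr_def
      have hσr : σ r = q := σ.apply_symm_apply q
      have hr : r ≠ q := fun h => hq (by rw [← hσr, h])
      set e : Equiv.Perm P := σ.trans (Equiv.swap q s) with he_def
      have he_q : e q = q := by
        simp only [he_def, Equiv.trans_apply, ← hs_def, Equiv.swap_apply_right]
      have he_r : e r = s := by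
        simp only [he_def, Equiv.trans_apply, hσr, Equiv.swap_apply_left]
      have he_other : ∀ p : P, p ≠ q → p ≠ r → e p = σ p := by
        intro p hpq hpr
        have h1' : σ p ≠ q := fun h => hpr (by rw [← hσr] at h; exact σ.injective h)
        have h2' : σ p ≠ s := fun h => hpq (σ.injective (h.trans hs_def))
        simp only [he_def, Equiv.trans_apply, Equiv.swap_apply_of_ne_of_ne h1' h2']
      have hiff : ∀ p : P, p ≠ q ↔ e p ≠ q :=
        fun p => not_iff_not.mpr ⟨fun h => h ▸ he_q, fun h => e.injective (h.trans he_q.symm)⟩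
      set σ' : Equiv.Perm {p : P // p ≠ q} := e.subtypePerm (fun p => (hiff p).symm) with hσ'
      -- the marginal square functions
      set v : I → ℝ≥0∞ := fun x => (∑' t : J q, a r x (t : I) ^ 2) ^ (1/2 : ℝ) with hv
      set w : I → ℝ≥0∞ := fun y => (∑' t : J q, a q (t : I) y ^ 2) ^ (1/2 : ℝ) with hw
      have hv2 : ∀ x, v x ^ 2 = ∑' t : J q, a r x (t : I) ^ 2 := fun x => aux_sqrt_sq _
      have hw2 : ∀ y, w y ^ 2 = ∑' t : J q, a q (t : I) y ^ 2 := fun y => aux_sqrt_sq _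
      have hSv : (∑' x : J r, v (x : I) ^ 2) ≠ ∞ := by
        have hh := h1 r (by rw [hσr]; exact fun h => hr h.symm)
        rw [hσr] at hh
        rw [ENNReal.tsum_prod'] at hh
        rw [show (∑' x : J r, v (x : I) ^ 2)
            = ∑' (x : J r) (t : J q), a r (x : I) (t : I) ^ 2 from tsum_congr fun x => hv2 _]
        exact hh
      have hSw : (∑' y : J s, w (y : I) ^ 2) ≠ ∞ := by
        have hh := h1 q hq
        rw [ENNReal.tsum_prod'] at hh
        rw [ENNReal.tsum_comm] at hh
        rw [show (∑' y : J s, w (y : I) ^ 2)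
            = ∑' (y : J s) (t : J q), a q (t : I) (y : I) ^ 2 from tsum_congr fun y => hw2 _]
        exact hh
      have hCS : ∀ (y z : I), (∑' x : J q, a r y (x : I) * a q (x : I) z) ≤ v y * w z :=
        fun y z => aux_tsum_cs (fun x : J q => a r y (x : I)) (fun x : J q => a q (x : I) z)
      -- new matrix family
      set a' : {p : P // p ≠ q} → I → I → ℝ≥0∞ :=
        fun p => if p.1 = r then (fun x y => v x * w y) else a p.1 with ha'
      have hσ'r : σ' ⟨r, hr⟩ = ⟨s, hs⟩ := Subtype.ext he_r
      -- the rearranged product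
      set G : ↥(J q) × ((p : {p : P // p ≠ q}) → ↥(J p.1)) → ℝ≥0∞ :=
        fun y => a q (y.1 : I) (y.2 ⟨s, hs⟩ : I) *
          (a r (y.2 ⟨r, hr⟩ : I) (y.1 : I) *
            ∏ p ∈ (Finset.univ.erase (⟨r, hr⟩ : {p : P // p ≠ q})),
              a p.1 (y.2 p : I) (y.2 (σ' p) : I)) with hG
      have hFG : ∀ i : (p : P) → J p, (∏ p, a p (i p : I) (i (σ p) : I)) = G (E i) := by
        intro i
        have hGEi : G (E i) = a q (i q : I) (i s : I) *
            (a r (i r : I) (i q : I) *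
              ∏ p ∈ (Finset.univ.erase (⟨r, hr⟩ : {p : P // p ≠ q})),
                a p.1 (i p.1 : I) (i ((σ' p : {p : P // p ≠ q}) : P) : I)) := rfl
        rw [hGEi, Fintype.prod_eq_mul_prod_compl q, Finset.prod_subtype (p := fun p => p ≠ q)
          ({q}ᶜ : Finset P) (fun p => by simp) (fun p => a p (i p : I) (i (σ p) : I)),
          ← Finset.mul_prod_erase Finset.univ
            (fun p : {p : P // p ≠ q} => a p.1 (i p.1 : I) (i (σ p.1) : I))
            (Finset.mem_univ ⟨r, hr⟩)]
        congr 1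
        congr 1
        · have : ((i (σ r)) : I) = ((i q) : I) := by rw [hσr]
          simp only [this]
        · refine Finset.prod_congr rfl fun p hp => ?_
          have hpr : p.1 ≠ r := fun hh => (Finset.mem_erase.mp hp).1 (Subtype.ext hh)
          have : ((i (σ p.1)) : I) = ((i ((σ' p : {p : P // p ≠ q}) : P)) : I) := by
            have he : ((σ' p : {p : P // p ≠ q}) : P) = σ p.1 := he_other p.1 p.2 hpr
            rw [he]
          rw [this]
      rw [tsum_congr hFG, E.tsum_eq G, ENNReal.tsum_prod', ENNReal.tsum_comm]
      -- bound the inner sums by Cauchy–Schwarz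
      have hbound : ∀ i' : (p : {p : P // p ≠ q}) → ↥(J p.1),
          (∑' x : J q, G (x, i'))
            ≤ ∏ p : {p : P // p ≠ q}, a' p (i' p : I) (i' (σ' p) : I) := by
        intro i'
        have hre : ∀ x : ↥(J q), G (x, i')
            = (a r (i' ⟨r, hr⟩ : I) (x : I) * a q (x : I) (i' ⟨s, hs⟩ : I)) *
              ∏ p ∈ (Finset.univ.erase (⟨r, hr⟩ : {p : P // p ≠ q})),
                a p.1 (i' p : I) (i' (σ' p) : I) := fun x => by
          rw [hG]; ring
        rw [tsum_congr hre, ENNReal.tsum_mul_right]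
        refine le_trans (mul_le_mul_left (hCS (i' ⟨r, hr⟩ : I) (i' ⟨s, hs⟩ : I)) _) ?_
        rw [← Finset.mul_prod_erase Finset.univ
            (fun p : {p : P // p ≠ q} => a' p (i' p : I) (i' (σ' p) : I))
            (Finset.mem_univ ⟨r, hr⟩)]
        have h1f : a' ⟨r, hr⟩ (i' ⟨r, hr⟩ : I) (i' (σ' ⟨r, hr⟩) : I)
            = v (i' ⟨r, hr⟩ : I) * w (i' ⟨s, hs⟩ : I) := by
          rw [hσ'r, ha']; simp
        have h2f : ∏ p ∈ (Finset.univ.erase (⟨r, hr⟩ : {p : P // p ≠ q})),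
              a' p (i' p : I) (i' (σ' p) : I)
            = ∏ p ∈ (Finset.univ.erase (⟨r, hr⟩ : {p : P // p ≠ q})),
              a p.1 (i' p : I) (i' (σ' p) : I) := by
          refine Finset.prod_congr rfl fun p hp => ?_
          have hpr : p.1 ≠ r := fun hh => (Finset.mem_erase.mp hp).1 (Subtype.ext hh)
          rw [ha']
          simp only [if_neg hpr]
        rw [h1f, h2f]
      refine ne_top_of_le_ne_top ?_ (Summable.tsum_le_tsum hbound ENNReal.summable ENNReal.summable)
      refine IH _ hcard' σ' (fun p => J p.1) a' ?_ ?_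
      · -- square-summability conditions for the new system
        intro p hp
        by_cases hpr : p.1 = r
        · have hp' : p = ⟨r, hr⟩ := Subtype.ext hpr
          subst hp'
          rw [hσ'r]
          have haa : a' ⟨r, hr⟩ = fun x y => v x * w y := by rw [ha']; simp
          rw [haa, ENNReal.tsum_prod']
          have hx : ∀ x : ↥(J r), (∑' y : ↥(J ((⟨s, hs⟩ : {p : P // p ≠ q}) : P)),
                (v (x : I) * w (y : I)) ^ 2)
              = v (x : I) ^ 2 * ∑' y : ↥(J s), w (y : I) ^ 2 := fun x => by
            simp only [mul_pow]
            exact ENNReal.tsum_mul_left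
          rw [tsum_congr hx, ENNReal.tsum_mul_right]
          exact ENNReal.mul_ne_top hSv hSw
        · have he : ((σ' p : {p : P // p ≠ q}) : P) = σ p.1 := he_other p.1 p.2 hpr
          have hσp : σ p.1 ≠ p.1 := by
            intro hh
            exact hp (Subtype.ext (he.trans hh))
          have haa : a' p = a p.1 := by rw [ha']; simp only [if_neg hpr]
          show (∑' xy : ↥(J p.1) × ↥(J ((σ' p : {p : P // p ≠ q}) : P)),
            a' p (xy.1 : I) (xy.2 : I) ^ 2) ≠ ⊤
          rw [he, haa]
          exact h1 p.1 hσp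
      · intro p hp
        by_cases hpr : p.1 = r
        · have hp' : p = ⟨r, hr⟩ := Subtype.ext hpr
          subst hp'
          have hsr : s = r := congrArg Subtype.val (hσ'r.symm.trans hp)
          have haa : a' ⟨r, hr⟩ = fun x y => v x * w y := by rw [ha']; simp
          show (∑' x : ↥(J r), a' ⟨r, hr⟩ (x : I) (x : I)) ≠ ⊤
          rw [haa]
          refine aux_tsum_cs_ne_top (fun x : ↥(J r) => v (x : I)) (fun x : ↥(J r) => w (x : I))
            hSv ?_
          rw [hsr] at hSw
          exact hSw
        · have he : ((σ' p : {p : P // p ≠ q}) : P) = σ p.1 := he_other p.1 p.2 hpr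
          have hσp : σ p.1 = p.1 := he.symm.trans (congrArg Subtype.val hp)
          have haa : a' p = a p.1 := by rw [ha']; simp only [if_neg hpr]
          show (∑' x : ↥(J p.1), a' p (x : I) (x : I)) ≠ ⊤
          rw [haa]
          exact h2 p.1 hσp


/-- Summability underlying equation (3.17) of the paper: for a fixed-point-free permutation `σ`
of `{1,…,m}` and a matrix `M` which is square-summable on each rectangle `J_p × J_{σ(p)}`, the
family `(i_1,…,i_m) ↦ ∏_p M(i_p, i_{σ(p)})`, indexed by tuples in `J_1 × ⋯ × J_m`, is
absolutely summable. -/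
theorem stmt_12
    {I : Type*} [Countable I]
    (m : ℕ) (hm : 2 ≤ m)
    (σ : Equiv.Perm (Fin m)) (hσ : ∀ p, σ p ≠ p)
    (J : Fin m → Set I) (M : I → I → ℂ)
    (hM : ∀ p, Summable fun ij : J p × J (σ p) => ‖M ij.1.1 ij.2.1‖ ^ 2) :
    Summable fun i : (p : Fin m) → J p => ‖∏ p, M (i p : I) (i (σ p) : I)‖ := by
  have h1 : ∀ p : Fin m, σ p ≠ p →
      (∑' xy : J p × J (σ p), ((‖M (xy.1 : I) (xy.2 : I)‖₊ : ℝ≥0∞)) ^ 2) ≠ ∞ := by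
    intro p _
    have hs := hM p
    have heq : (fun ij : J p × J (σ p) => ‖M (ij.1 : I) (ij.2 : I)‖ ^ 2)
        = fun ij : J p × J (σ p) => ((‖M (ij.1 : I) (ij.2 : I)‖₊ ^ 2 : ℝ≥0) : ℝ) := by
      funext ij
      push_cast
      rfl
    rw [heq] at hs
    have hs' := NNReal.summable_coe.mp hs
    have := ENNReal.tsum_coe_ne_top_iff_summable.mpr hs'
    simpa [ENNReal.coe_pow] using this
  have h2 : ∀ p : Fin m, σ p = p → (∑' x : J p, ((‖M (x : I) (x : I)‖₊ : ℝ≥0∞))) ≠ ∞ :=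
    fun p hp => absurd hp (hσ p)
  have key := aux_key m (Fin m) (Fintype.card_fin m) σ J
    (fun p x y => (‖M x y‖₊ : ℝ≥0∞)) h1 h2
  have heq : ∀ i : (p : Fin m) → J p,
      ((‖∏ p, M (i p : I) (i (σ p) : I)‖₊ : ℝ≥0∞))
        = ∏ p, ((‖M (i p : I) (i (σ p) : I)‖₊ : ℝ≥0∞)) := by
    intro i
    rw [nnnorm_prod, ENNReal.coe_finset_prod]
  rw [← tsum_congr heq] at key
  have hsum : Summable fun i : (p : Fin m) → J p => ‖∏ p, M (i p : I) (i (σ p) : I)‖₊ :=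
    ENNReal.tsum_coe_ne_top_iff_summable.mp key
  exact NNReal.summable_coe.mpr hsum
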